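/- In U_q^+ = U_q^+(gl(1|2)), any monomial in the generators containing E_1 at least three times vanishes; equivalently, E_1 E_2^{a} E_1 E_2^{b} E_1 = 0 for all integers a, b ≥ 0. -/
import Mathlib


/-- The ground field `ℚ(q)` of rational functions. -/
abbrev Fq : Type := RatFunc ℚ

/-- The variable `q ∈ ℚ(q)`. -/
noncomputable def qq : Fq := RatFunc.X

/-- The defining relations of `U_q^+(gl(1|2))`:
`E₁² = 0` and `(q + q⁻¹) E₂E₁E₂ = E₁E₂² + E₂²E₁`, where `E₁ = ι 0`, `E₂ = ι 1`. -/
inductive UqRel : FreeAlgebra Fq (Fin 2) → FreeAlgebra Fq (Fin 2) → Prop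
  | oneSq : UqRel (FreeAlgebra.ι Fq 0 * FreeAlgebra.ι Fq 0) 0
  | serre : UqRel
      ((qq + qq⁻¹) • (FreeAlgebra.ι Fq 1 * FreeAlgebra.ι Fq 0 * FreeAlgebra.ι Fq 1))
      (FreeAlgebra.ι Fq 0 * FreeAlgebra.ι Fq 1 * FreeAlgebra.ι Fq 1 +
        FreeAlgebra.ι Fq 1 * FreeAlgebra.ι Fq 1 * FreeAlgebra.ι Fq 0)

/-- The algebra `U_q^+ = U_q^+(gl(1|2))`. -/
abbrev Uq : Type := RingQuot UqRel

/-- The generator `E₁` (odd). -/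
noncomputable def E₁ : Uq := RingQuot.mkAlgHom Fq UqRel (FreeAlgebra.ι Fq 0)

/-- The generator `E₂` (even). -/
noncomputable def E₂ : Uq := RingQuot.mkAlgHom Fq UqRel (FreeAlgebra.ι Fq 1)

/-- The quantum integer `[j] = (q^j - q^{-j})/(q - q^{-1})`. -/
noncomputable def qInt (j : ℕ) : Fq := (qq ^ j - qq⁻¹ ^ j) / (qq - qq⁻¹)

/-- The quantum factorial `[j]! = [1][2]⋯[j]`. -/
noncomputable def qFact (j : ℕ) : Fq := ∏ t ∈ Finset.range j, qInt (t + 1)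

/-- The quantum binomial `[a choose b] = [a]!/([b]![a-b]!)`. -/
noncomputable def qBinom (a b : ℕ) : Fq := qFact a / (qFact b * qFact (a - b))

/-- The quantum divided power `E₂^{(j)} = E₂^j / [j]!`. -/
noncomputable def E₂pow (j : ℕ) : Uq := (qFact j)⁻¹ • E₂ ^ j

lemma hcne : qq + qq⁻¹ ≠ 0 := by
  have hq : qq ≠ 0 := RatFunc.X_ne_zero
  have h2 : qq ^ 2 + 1 ≠ 0 := by
    have : (qq : Fq) ^ 2 + 1 = algebraMap (Polynomial ℚ) Fq (Polynomial.X ^ 2 + 1) := by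
      simp [qq, map_add, map_pow, RatFunc.algebraMap_X]
    rw [this]
    apply RatFunc.algebraMap_ne_zero
    intro h
    have := congrArg (fun p => Polynomial.coeff p 0) h
    simp at this
  intro h
  apply h2
  have := congrArg (fun x => qq * x) h
  field_simp at this
  linear_combination this

lemma rel1 : E₁ * E₁ = 0 := by
  have := RingQuot.mkAlgHom_rel Fq UqRel.oneSq
  simpa [E₁, map_mul] using this

lemma rel2 : (qq + qq⁻¹) • (E₂ * (E₁ * E₂)) = E₁ * (E₂ * E₂) + E₂ * (E₂ * E₁) := by
  have := RingQuot.mkAlgHom_rel Fq UqRel.serre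
  simp only [map_smul, map_add, map_mul] at this
  simpa [E₁, E₂, mul_assoc] using this

lemma e2 : E₂ * (E₂ * E₁) = (qq + qq⁻¹) • (E₂ * (E₁ * E₂)) - E₁ * (E₂ * E₂) := by
  rw [rel2]; abel

lemma e2' : E₁ * (E₂ * E₂) = (qq + qq⁻¹) • (E₂ * (E₁ * E₂)) - E₂ * (E₂ * E₁) := by
  rw [rel2]; abel

lemma keyg : ∀ b : ℕ, E₁ * (E₂ * (E₁ * (E₂ ^ b * E₁))) = 0
  | 0 => by
    have h := congrArg (fun x => E₁ * (E₂ * x)) rel1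
    simpa [mul_assoc] using h
  | 1 => by
    have h : (qq + qq⁻¹) • (E₁ * (E₂ * (E₁ * (E₂ ^ 1 * E₁)))) = 0 := by
      have h1 := congrArg (fun x => E₁ * (x * E₁)) rel2
      simp only [mul_smul_comm, smul_mul_assoc, mul_add, add_mul, mul_assoc] at h1 ⊢
      rw [pow_one]
      rw [h1]
      have ha : E₁ * (E₁ * (E₂ * (E₂ * E₁))) = 0 := by
        have := congrArg (fun x => x * (E₂ * (E₂ * E₁))) rel1
        simpa [mul_assoc] using this
      have hb : E₁ * (E₂ * (E₂ * (E₁ * E₁))) = 0 := by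
        have := congrArg (fun x => E₁ * (E₂ * (E₂ * x))) rel1
        simpa [mul_assoc] using this
      rw [ha, hb]; simp
    exact (smul_eq_zero.mp h).resolve_left hcne
  | (b+2) => by
    have h1 := keyg b
    have h2 := keyg (b+1)
    have hA : E₁ * (E₂ * (E₁ * (E₂ ^ b * (E₂ * (E₁ * E₂))))) = 0 := by
      have := congrArg (fun x => x * E₂) h2
      simpa [mul_assoc, pow_succ] using this
    have hB : E₁ * (E₂ * (E₁ * (E₂ ^ b * (E₁ * (E₂ * E₂))))) = 0 := by
      have := congrArg (fun x => x * (E₂ * E₂)) h1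
      simpa [mul_assoc] using this
    calc E₁ * (E₂ * (E₁ * (E₂ ^ (b+2) * E₁)))
        = E₁ * (E₂ * (E₁ * (E₂ ^ b * (E₂ * (E₂ * E₁))))) := by
          simp [pow_succ, mul_assoc]
      _ = 0 := by
          rw [e2]
          simp only [mul_sub, mul_smul_comm]
          rw [hA, hB]; simp

lemma keyf : ∀ a b : ℕ, E₁ * (E₂ ^ a * (E₁ * (E₂ ^ b * E₁))) = 0
  | 0, b => by
    have := congrArg (fun x => x * (E₂ ^ b * E₁)) rel1
    simpa [mul_assoc] using this
  | 1, b => by simpa using keyg b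
  | (a+2), b => by
    have h1 := keyf a b
    have h2 := keyf (a+1) b
    have hA : E₂ * (E₁ * (E₂ * (E₂ ^ a * (E₁ * (E₂ ^ b * E₁))))) = 0 := by
      have := congrArg (fun x => E₂ * x) h2
      simpa [mul_assoc, pow_succ'] using this
    have hB : E₂ * (E₂ * (E₁ * (E₂ ^ a * (E₁ * (E₂ ^ b * E₁))))) = 0 := by
      have := congrArg (fun x => E₂ * (E₂ * x)) h1
      simpa [mul_assoc] using this
    calc E₁ * (E₂ ^ (a+2) * (E₁ * (E₂ ^ b * E₁)))
        = (E₁ * (E₂ * E₂)) * (E₂ ^ a * (E₁ * (E₂ ^ b * E₁))) := by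
          simp [pow_succ', mul_assoc]
      _ = 0 := by
          rw [e2']
          simp only [sub_mul, smul_mul_assoc, mul_assoc]
          rw [hA, hB]; simp

noncomputable def F : Fin 2 → Uq := fun i => if i = 0 then E₁ else E₂

lemma lemM : ∀ (t : List (Fin 2)) (k m : ℕ), 1 ≤ t.count 0 →
    E₁ * (E₂ ^ k * (E₁ * (E₂ ^ m * (t.map F).prod))) = 0
  | [], k, m, h => by simp at h
  | (0 :: s), k, m, h => by
    have := congrArg (fun x => x * (s.map F).prod) (keyf k m)
    simp only [List.map_cons, List.prod_cons, F, if_pos rfl]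
    simpa [mul_assoc] using this
  | (1 :: s), k, m, h => by
    have hc : 1 ≤ s.count 0 := by simpa using h
    have := lemM s k (m+1) hc
    simp only [List.map_cons, List.prod_cons, F]
    norm_num
    simpa [mul_assoc, pow_succ] using this

lemma lemL : ∀ (t : List (Fin 2)) (k : ℕ), 2 ≤ t.count 0 →
    E₁ * (E₂ ^ k * (t.map F).prod) = 0
  | [], k, h => by simp at h
  | (0 :: s), k, h => by
    have hc : 1 ≤ s.count 0 := by rw [List.count_cons_self] at h; omega
    have := lemM s k 0 hc
    simp only [List.map_cons, List.prod_cons, F, if_pos rfl]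
    simpa [mul_assoc] using this
  | (1 :: s), k, h => by
    have hc : 2 ≤ s.count 0 := by simpa using h
    have := lemL s (k+1) hc
    simp only [List.map_cons, List.prod_cons, F]
    norm_num
    simpa [mul_assoc, pow_succ] using this

lemma main1 : ∀ (l : List (Fin 2)), 3 ≤ l.count 0 → (l.map F).prod = 0
  | [], h => by simp at h
  | (0 :: s), h => by
    have hc : 2 ≤ s.count 0 := by rw [List.count_cons_self] at h; omega
    have := lemL s 0 hc
    simp only [List.map_cons, List.prod_cons, F, if_pos rfl]
    simpa using this
  | (1 :: s), h => by
    have hc : 3 ≤ s.count 0 := by simpa using h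
    simp only [List.map_cons, List.prod_cons, F]
    norm_num
    rw [main1 s hc, mul_zero]


/-!
STATEMENT 17.  In `U_q^+ = U_q^+(gl(1|2))`, any monomial in the generators containing
`E₁` at least three times vanishes; equivalently, `E₁ E₂^a E₁ E₂^b E₁ = 0` for all
integers `a, b ≥ 0`. -/
theorem stmt17 :
    (∀ l : List (Fin 2), 3 ≤ l.count 0 →
      (l.map fun i : Fin 2 => if i = 0 then E₁ else E₂).prod = 0) ∧
    (∀ a b : ℕ, E₁ * E₂ ^ a * E₁ * E₂ ^ b * E₁ = 0) := by
  constructor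
  · exact fun l h => main1 l h
  · intro a b
    have := keyf a b
    simpa [mul_assoc] using this
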